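/- Let a = a' + εa'' be a complexified dual quaternion with a'·conj(a') = 0, and suppose a' and conj(a') are linearly independent over ℂ. Set f := a'² + conj(a')². Then f is a nonzero scalar. Moreover, writing x = αa + β·conj_c(a) + ε(γa' + δ·conj(a')) where conj_c(a) := conj(a') − εa'', the primal part of x·conj(x) equals αβ·f; hence x·conj(x) has vanishing primal part iff α = 0 or β = 0. -/

import Mathlib

open Quaternion TrivSqZeroExt

/-- The complexified dual quaternions. -/
noncomputable abbrev DHC := DualNumber (Quaternion ℂ)

/-- Dual quaternion conjugation (fixing the complex scalar unit and `ε`). -/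
noncomputable def dconj (q : DHC) : DHC := (star q.fst, star q.snd)

/-- The point `x = α a + β conj_c(a) + ε(γ a' + δ conj a')` where
`a = a' + ε a''` and `conj_c(a) = conj a' - ε a''`. -/
noncomputable def xpt (a' a'' : Quaternion ℂ) (α β γ δ : ℂ) : DHC :=
  α • (inl a' + inr a'') + β • (inl (star a') - inr a'') +
    inr (γ • a' + δ • star a')

theorem star_mul_self_zero {a' : Quaternion ℂ} (h0 : a' * star a' = 0) :
    star a' * a' = 0 := by
  rw [Quaternion.star_mul_self, ← Quaternion.self_mul_star, h0]

theorem f_eq {a' : Quaternion ℂ} (h0 : a' * star a' = 0) :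
    a' ^ 2 + star a' ^ 2 = algebraMap ℂ (Quaternion ℂ) ((2 * a'.re) ^ 2) := by
  have hs := star_mul_self_zero h0
  have key : a' ^ 2 + star a' ^ 2 = (a' + star a') ^ 2 := by
    have : (a' + star a') ^ 2 =
        a' ^ 2 + a' * star a' + star a' * a' + star a' ^ 2 := by
      noncomm_ring
    rw [this, h0, hs]; abel
  rw [key, Quaternion.self_add_star', map_pow]
  rfl

/-- Let `a = a' + ε a''` with `a' conj a' = 0` and `a'`, `conj a'` linearly
independent over `ℂ`. Then `f = a'² + (conj a')²` is a nonzero scalar, the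
primal part of `x conj x` for `x = α a + β conj_c(a) + ε(γ a' + δ conj a')`
equals `αβ f`, and it vanishes iff `α = 0` or `β = 0`. -/
theorem coe_mul_coe_mul (x y : Quaternion ℂ) (u v : ℂ) :
    (↑u * x) * (↑v * y) = ↑(u * v) * (x * y) := by
  rw [(Quaternion.coe_commute v x).symm.mul_mul_mul_comm, Quaternion.coe_mul]

theorem primal_norm_on_U (a' a'' : Quaternion ℂ)
    (h0 : a' * star a' = 0)
    (hli : LinearIndependent ℂ ![a', star a']) :
    (∃ c : ℂ, c ≠ 0 ∧
        a' ^ 2 + star a' ^ 2 = algebraMap ℂ (Quaternion ℂ) c) ∧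
    ∀ α β γ δ : ℂ,
      (xpt a' a'' α β γ δ * dconj (xpt a' a'' α β γ δ)).fst =
          (α * β) • (a' ^ 2 + star a' ^ 2) ∧
      ((xpt a' a'' α β γ δ * dconj (xpt a' a'' α β γ δ)).fst = 0 ↔
          α = 0 ∨ β = 0) := by
  have hs := star_mul_self_zero h0
  have hre : (2 : ℂ) * a'.re ≠ 0 := by
    intro h
    have h2 : a'.re = 0 := by
      simpa [mul_eq_zero] using h
    have hdep : (1 : ℂ) • a' + (1 : ℂ) • star a' = 0 := by
      rw [one_smul, one_smul, Quaternion.self_add_star', h2, mul_zero]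
      simp
    have := Fintype.linearIndependent_iff.mp hli ![1, 1] (by
      simpa [Fin.sum_univ_two] using hdep) 0
    simp at this
  have hf := f_eq h0
  have hinj : Function.Injective (algebraMap ℂ (Quaternion ℂ)) := fun x y hxy => by
    simpa using congrArg QuaternionAlgebra.re hxy
  have hfne : a' ^ 2 + star a' ^ 2 ≠ 0 := by
    rw [hf]
    intro h
    exact pow_ne_zero 2 hre (hinj (by rw [h, map_zero]))
  refine ⟨⟨(2 * a'.re) ^ 2, pow_ne_zero _ hre, hf⟩, fun α β γ δ => ?_⟩
  have hfst : (xpt a' a'' α β γ δ * dconj (xpt a' a'' α β γ δ)).fst =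
      (α * β) • (a' ^ 2 + star a' ^ 2) := by
    have h1 : (xpt a' a'' α β γ δ).fst = α • a' + β • star a' := by
      simp [xpt]
    rw [fst_mul, dconj, h1]
    show (α • a' + β • star a') * star (α • a' + β • star a') =
      (α * β) • (a' ^ 2 + star a' ^ 2)
    rw [show star (α • a' + β • star a') = α • star a' + β • a' by
      erw [star_add, Quaternion.star_smul, Quaternion.star_smul, star_star]; rfl]
    simp only [← Quaternion.coe_mul_eq_smul]
    rw [add_mul, mul_add, mul_add, coe_mul_coe_mul, coe_mul_coe_mul,
      coe_mul_coe_mul, coe_mul_coe_mul, h0, hs, mul_zero, mul_zero,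
      zero_add, add_zero, mul_comm β α, mul_add, sq, sq]
  refine ⟨hfst, ?_⟩
  rw [hfst, hf]
  show (α * β) • (((2 * a'.re) ^ 2 : ℂ) : Quaternion ℂ) = 0 ↔ α = 0 ∨ β = 0
  rw [Quaternion.smul_coe]
  rw [show ((0 : Quaternion ℂ)) = ((0 : ℂ) : Quaternion ℂ) by simp,
    Quaternion.coe_injective.eq_iff, mul_eq_zero, mul_eq_zero]
  simp [pow_ne_zero 2 hre]
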